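/- In the very sparse limit ε → 0, the soft-thresholding minimax risk satisfies M#(ε) = 2ε log(1/ε)(1 + o(1)), where M#(ε) = min_{α≥0} M(ε,α) and M(ε,α) = ε(1+α²) + (1−ε)[2(1+α²)Φ(−α) − 2αφ(α)]. -/

import Mathlib

/-- Standard Gaussian density φ. -/
noncomputable def stdGaussPDF (z : ℝ) : ℝ := Real.exp (-z^2/2) / Real.sqrt (2*Real.pi)

/-- Standard Gaussian CDF Φ. -/
noncomputable def stdGaussCDF (z : ℝ) : ℝ := ∫ u in Set.Iic z, stdGaussPDF u

/-- Worst-case soft thresholding MSE M(ε,α). -/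
noncomputable def Mrisk (ε α : ℝ) : ℝ :=
  ε*(1+α^2) + (1-ε)*(2*(1+α^2) * stdGaussCDF (-α) - 2*α * stdGaussPDF α)

/-- Soft-thresholding minimax risk M#(ε) = min over α ≥ 0 of M(ε,α). -/
noncomputable def Mhash (ε : ℝ) : ℝ := sInf (Mrisk ε '' Set.Ici 0)

open MeasureTheory Set Filter Real
set_option maxHeartbeats 1000000

noncomputable def gTail (a : ℝ) : ℝ := ∫ u in Set.Ioi a, stdGaussPDF u

lemma sqrt2pi_pos : 0 < Real.sqrt (2*Real.pi) := Real.sqrt_pos.2 (by positivity)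
lemma pdf_pos (x : ℝ) : 0 < stdGaussPDF x := div_pos (Real.exp_pos _) sqrt2pi_pos
lemma pdf_cont : Continuous stdGaussPDF := by unfold stdGaussPDF; fun_prop
lemma pdf_eq (x : ℝ) : stdGaussPDF x = Real.exp (-(1/2) * x^2) / Real.sqrt (2*Real.pi) := by
  unfold stdGaussPDF; ring_nf

lemma integrable_pdf : Integrable stdGaussPDF := by
  have h := (integrable_exp_neg_mul_sq (b := (1/2:ℝ)) (by norm_num)).div_const (Real.sqrt (2*Real.pi))
  refine h.congr ?_
  filter_upwards with x
  rw [pdf_eq]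

lemma integrable_id_mul_pdf : Integrable (fun u : ℝ => u * stdGaussPDF u) := by
  have h := (integrable_mul_exp_neg_mul_sq (b := (1/2:ℝ)) (by norm_num)).div_const (Real.sqrt (2*Real.pi))
  refine h.congr ?_
  filter_upwards with x
  rw [pdf_eq]; ring

lemma integrable_sq_mul_pdf : Integrable (fun u : ℝ => u^2 * stdGaussPDF u) := by
  have h := (integrable_rpow_mul_exp_neg_mul_sq (b := (1/2:ℝ)) (by norm_num) (s := 2) (by norm_num)).div_const (Real.sqrt (2*Real.pi))
  refine h.congr ?_
  filter_upwards with x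
  rw [pdf_eq, show x ^ (2:ℝ) = x ^ (2:ℕ) from Real.rpow_natCast x 2]; ring

lemma tendsto_pdf_atTop : Tendsto stdGaussPDF atTop (nhds 0) := by
  have h : Tendsto (fun x : ℝ => Real.exp (-x^2/2)) atTop (nhds 0) := by
    apply Real.tendsto_exp_atBot.comp
    have h0 : Tendsto (fun x : ℝ => x^2/2) atTop atTop :=
      (tendsto_pow_atTop (by norm_num)).atTop_div_const (by norm_num)
    exact (tendsto_neg_atTop_atBot.comp h0).congr (fun x => by simp [neg_div])
  have := h.div_const (Real.sqrt (2*Real.pi))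
  rw [zero_div] at this
  exact this

lemma tendsto_id_mul_pdf : Tendsto (fun u : ℝ => u * stdGaussPDF u) atTop (nhds 0) := by
  have h := (rpow_mul_exp_neg_mul_sq_isLittleO_exp_neg (b := (1/2:ℝ)) (by norm_num) 1)
  have hexp : Tendsto (fun x : ℝ => Real.exp (-(1/2) * x)) atTop (nhds 0) := by
    apply Real.tendsto_exp_atBot.comp
    have h0 : Tendsto (fun x : ℝ => (1/2:ℝ) * x) atTop atTop :=
      tendsto_id.const_mul_atTop (by norm_num)
    exact (tendsto_neg_atTop_atBot.comp h0).congr (fun x => by simp)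
  have h2 : Tendsto (fun x : ℝ => x ^ (1:ℝ) * Real.exp (-(1/2) * x^2)) atTop (nhds 0) :=
    h.tendsto_zero_of_tendsto hexp
  have h3 : Tendsto (fun x : ℝ => x ^ (1:ℝ) * Real.exp (-(1/2) * x^2) / Real.sqrt (2*Real.pi)) atTop (nhds 0) := by
    simpa using h2.div_const _
  refine h3.congr' ?_
  filter_upwards [eventually_ge_atTop (0:ℝ)] with x hx
  rw [Real.rpow_one]
  unfold stdGaussPDF; ring_nf

lemma hasDerivAt_pdf (x : ℝ) : HasDerivAt stdGaussPDF (-x * stdGaussPDF x) x := by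
  have h1 : HasDerivAt (fun x : ℝ => -x^2/2) (-x) x := by
    have := ((hasDerivAt_pow 2 x).neg.div_const 2)
    refine this.congr_deriv ?_
    norm_num; ring
  have h2 := (h1.exp).div_const (Real.sqrt (2*Real.pi))
  refine h2.congr_deriv ?_
  unfold stdGaussPDF; ring

lemma integrable_sq_sub_pdf : Integrable (fun u : ℝ => u^2 * stdGaussPDF u - stdGaussPDF u) := by
  have h := integrable_sq_mul_pdf.sub integrable_pdf
  exact h.congr (by filter_upwards with u; simp [Pi.sub_apply])

lemma integrable_shift_sq_pdf (a : ℝ) : Integrable (fun u : ℝ => (u - a)^2 * stdGaussPDF u) := by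
  have h := (integrable_sq_mul_pdf.sub (integrable_id_mul_pdf.const_mul (2*a))).add (integrable_pdf.const_mul (a^2))
  refine h.congr ?_
  filter_upwards with u
  simp only [Pi.add_apply, Pi.sub_apply]
  ring

lemma integral_Ioi_id_mul_pdf (a : ℝ) :
    ∫ u in Set.Ioi a, u * stdGaussPDF u = stdGaussPDF a := by
  have := integral_Ioi_of_hasDerivAt_of_tendsto
    (f := fun u => -stdGaussPDF u) (f' := fun u => u * stdGaussPDF u) (a := a) (m := 0)
    (pdf_cont.neg.continuousWithinAt)
    (fun x _ => (hasDerivAt_pdf x).neg.congr_deriv (by ring))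
    (integrable_id_mul_pdf.integrableOn)
    (by simpa using tendsto_pdf_atTop.neg)
  simpa using this

lemma integral_Ioi_sq_sub_pdf (a : ℝ) :
    ∫ u in Set.Ioi a, (u^2 * stdGaussPDF u - stdGaussPDF u) = a * stdGaussPDF a := by
  have := integral_Ioi_of_hasDerivAt_of_tendsto
    (f := fun u => -(u * stdGaussPDF u)) (f' := fun u => u^2 * stdGaussPDF u - stdGaussPDF u)
    (a := a) (m := 0)
    ((continuous_id.mul pdf_cont).neg.continuousWithinAt)
    (fun x _ => by
      have hmul := (hasDerivAt_id x).mul (hasDerivAt_pdf x)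
      have e : x^2 * stdGaussPDF x - stdGaussPDF x
          = -(1 * stdGaussPDF x + id x * (-x * stdGaussPDF x)) := by
        simp only [id_eq]; ring
      beta_reduce; rw [e]
      exact hmul.neg)
    (integrable_sq_sub_pdf.integrableOn)
    (by simpa using tendsto_id_mul_pdf.neg)
  simpa using this

lemma integral_Ioi_sq_mul_pdf (a : ℝ) :
    ∫ u in Set.Ioi a, u^2 * stdGaussPDF u = a * stdGaussPDF a + gTail a := by
  have h := integral_Ioi_sq_sub_pdf a
  rw [integral_sub (integrable_sq_mul_pdf.integrableOn) (integrable_pdf.integrableOn)] at h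
  unfold gTail
  linarith

noncomputable def rIoi (a : ℝ) : ℝ := ∫ u in Set.Ioi a, (u - a)^2 * stdGaussPDF u

lemma rIoi_eq (a : ℝ) : rIoi a = (1 + a^2) * gTail a - a * stdGaussPDF a := by
  unfold rIoi
  have key : ∀ u : ℝ, (u - a)^2 * stdGaussPDF u
      = (u^2 * stdGaussPDF u - (2*a) * (u * stdGaussPDF u)) + (a^2) * stdGaussPDF u := by
    intro u; ring
  simp_rw [key]
  have hI1 : IntegrableOn (fun u : ℝ => u^2 * stdGaussPDF u - (2*a) * (u * stdGaussPDF u)) (Set.Ioi a) := by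
    have h := integrable_sq_mul_pdf.sub (integrable_id_mul_pdf.const_mul (2*a))
    exact (h.congr (by filter_upwards with u; simp [Pi.sub_apply])).integrableOn
  rw [integral_add hI1 ((integrable_pdf.const_mul (a^2)).integrableOn),
      integral_sub (integrable_sq_mul_pdf.integrableOn) ((integrable_id_mul_pdf.const_mul (2*a)).integrableOn),
      integral_const_mul, integral_const_mul,
      integral_Ioi_sq_mul_pdf, integral_Ioi_id_mul_pdf]
  unfold gTail
  ring

lemma pdf_even (x : ℝ) : stdGaussPDF (-x) = stdGaussPDF x := by
  unfold stdGaussPDF; rw [neg_sq]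

lemma cdf_neg (a : ℝ) : stdGaussCDF (-a) = gTail a := by
  unfold stdGaussCDF gTail
  rw [← integral_comp_neg_Ioi]
  exact setIntegral_congr_fun measurableSet_Ioi (fun u _ => pdf_even u)

lemma rIoi_nonneg (a : ℝ) : 0 ≤ rIoi a :=
  setIntegral_nonneg measurableSet_Ioi (fun u _ => mul_nonneg (sq_nonneg _) (pdf_pos u).le)

lemma Mrisk_eq (ε a : ℝ) : Mrisk ε a = ε*(1+a^2) + (1-ε)*(2 * rIoi a) := by
  unfold Mrisk
  rw [cdf_neg, rIoi_eq]
  ring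

lemma gTail_le {a : ℝ} (ha : 0 < a) : gTail a ≤ stdGaussPDF a / a := by
  have h1 : gTail a ≤ ∫ u in Set.Ioi a, a⁻¹ * (u * stdGaussPDF u) := by
    refine setIntegral_mono_on integrable_pdf.integrableOn
      ((integrable_id_mul_pdf.const_mul a⁻¹).integrableOn) measurableSet_Ioi ?_
    intro u hu
    have hu' : a ≤ u := (mem_Ioi.1 hu).le
    have hp := (pdf_pos u).le
    have h2 : (1:ℝ) ≤ a⁻¹ * u := by
      rw [← div_eq_inv_mul]
      exact (one_le_div ha).2 hu'
    calc stdGaussPDF u = 1 * stdGaussPDF u := (one_mul _).symm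
      _ ≤ (a⁻¹ * u) * stdGaussPDF u := mul_le_mul_of_nonneg_right h2 hp
      _ = a⁻¹ * (u * stdGaussPDF u) := by ring
  rw [integral_const_mul, integral_Ioi_id_mul_pdf] at h1
  rw [div_eq_inv_mul]
  exact h1

lemma rIoi_le {a : ℝ} (ha : 0 < a) : rIoi a ≤ (1 + a^2) * (stdGaussPDF a / a) := by
  rw [rIoi_eq]
  have h1 := gTail_le ha
  have h2 : 0 ≤ a * stdGaussPDF a := mul_nonneg ha.le (pdf_pos a).le
  nlinarith [sq_nonneg a]

lemma pdf_anti {x y : ℝ} (hx : 0 ≤ x) (hxy : x ≤ y) : stdGaussPDF y ≤ stdGaussPDF x := by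
  unfold stdGaussPDF
  have h : Real.exp (-y^2/2) ≤ Real.exp (-x^2/2) := by
    apply Real.exp_le_exp.2
    nlinarith [pow_le_pow_left₀ hx hxy 2]
  exact div_le_div_of_nonneg_right h sqrt2pi_pos.le

lemma rIoi_ge {a : ℝ} (ha : 0 ≤ a) : stdGaussPDF (a + 2) ≤ rIoi a := by
  have step1 : gTail (a+1) ≤ rIoi a := by
    unfold gTail rIoi
    calc ∫ u in Set.Ioi (a+1), stdGaussPDF u
        ≤ ∫ u in Set.Ioi (a+1), (u-a)^2 * stdGaussPDF u := by
          refine setIntegral_mono_on integrable_pdf.integrableOn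
            ((integrable_shift_sq_pdf a).integrableOn) measurableSet_Ioi ?_
          intro u hu
          have h1 : (1:ℝ) ≤ (u - a)^2 := by nlinarith [mem_Ioi.1 hu]
          nlinarith [(pdf_pos u).le, (pdf_pos u)]
      _ ≤ ∫ u in Set.Ioi a, (u-a)^2 * stdGaussPDF u := by
          refine setIntegral_mono_set ((integrable_shift_sq_pdf a).integrableOn) ?_ ?_
          · exact Eventually.of_forall (fun u => mul_nonneg (sq_nonneg _) (pdf_pos u).le)
          · exact (Set.Ioi_subset_Ioi (by linarith)).eventuallyLE
  have hvol : (volume (Set.Ioc (a+1) (a+2))).toReal = 1 := by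
    rw [Real.volume_Ioc, show a+2-(a+1) = (1:ℝ) by ring, ENNReal.toReal_ofReal zero_le_one]
  have hconst : ∫ _ in Set.Ioc (a+1) (a+2), stdGaussPDF (a+2) = stdGaussPDF (a+2) := by
    rw [setIntegral_const, measureReal_def, hvol, one_smul]
  have hmono : (∫ _ in Set.Ioc (a+1) (a+2), stdGaussPDF (a+2))
      ≤ ∫ u in Set.Ioc (a+1) (a+2), stdGaussPDF u := by
    refine setIntegral_mono_on ?_ (integrable_pdf.integrableOn) measurableSet_Ioc ?_
    · refine integrableOn_const ?_
      rw [Real.volume_Ioc]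
      exact ENNReal.ofReal_ne_top
    · intro u hu
      exact pdf_anti (by linarith [hu.1]) hu.2
  have hsub : (∫ u in Set.Ioc (a+1) (a+2), stdGaussPDF u) ≤ gTail (a+1) :=
    setIntegral_mono_set integrable_pdf.integrableOn
      (Eventually.of_forall (fun u => (pdf_pos u).le))
      (Set.Ioc_subset_Ioi_self.eventuallyLE)
  linarith [hconst ▸ hmono]

lemma tendsto_sqrt_atTop' : Tendsto Real.sqrt atTop atTop := by
  refine tendsto_atTop_atTop.mpr (fun b => ⟨(max b 0)^2, fun x hx => ?_⟩)
  have h1 : max b 0 ≤ Real.sqrt x := by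
    rw [show max b 0 = Real.sqrt ((max b 0)^2) from (Real.sqrt_sq (le_max_right b 0)).symm]
    exact Real.sqrt_le_sqrt hx
  exact (le_max_left b 0).trans h1

lemma tendsto_log_inv : Tendsto (fun ε : ℝ => Real.log (1/ε)) (nhdsWithin 0 (Set.Ioi 0)) atTop := by
  have h2 := tendsto_neg_atBot_atTop.comp Real.tendsto_log_nhdsGT_zero
  refine h2.congr (fun ε => ?_)
  simp [Real.log_inv]

lemma Mhash_upper {ε : ℝ} (hε0 : (0:ℝ) < ε) (hε2 : ε < 1/2) (hL : (28561:ℝ) ≤ Real.log (1/ε)) :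
      Mhash ε / (2 * ε * Real.log (1/ε)) ≤
      (1 + 2*Real.log (1/ε))/(2*Real.log (1/ε))
        * (1 + 2/(Real.sqrt (2*Real.pi) * Real.sqrt (2*Real.log (1/ε)))) := by
  set L := Real.log (1/ε) with hLdef
  have hL0 : (0:ℝ) < L := by linarith
  set α := Real.sqrt (2*L) with hαdef
  have hα0 : 0 < α := Real.sqrt_pos.2 (by linarith)
  have hα2 : α^2 = 2*L := Real.sq_sqrt (by linarith)
  have hexpL : Real.exp (-L) = ε := by
    rw [hLdef, one_div, Real.log_inv, neg_neg, Real.exp_log hε0]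
  have hpdfα : stdGaussPDF α = ε / Real.sqrt (2*Real.pi) := by
    unfold stdGaussPDF
    rw [hα2, show -(2*L)/2 = -L by ring, hexpL]
  have hbdd : BddBelow (Mrisk ε '' Set.Ici 0) := by
    refine ⟨0, fun y hy => ?_⟩
    obtain ⟨a, _, rfl⟩ := hy
    rw [Mrisk_eq]
    have h1 := rIoi_nonneg a
    nlinarith [sq_nonneg a]
  have h1 : Mhash ε ≤ Mrisk ε α := csInf_le hbdd ⟨α, Set.mem_Ici.2 hα0.le, rfl⟩
  have h2 : Mrisk ε α ≤ ε*(1+2*L) + 2*((1+2*L) * (ε / Real.sqrt (2*Real.pi) / α)) := by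
    rw [Mrisk_eq]
    have h3 := rIoi_le hα0
    rw [hpdfα, hα2] at h3
    have h4 := rIoi_nonneg α
    nlinarith
  have h2εL : (0:ℝ) < 2*ε*L := by positivity
  rw [div_le_iff₀ h2εL]
  have hUval : (1 + 2*L)/(2*L) * (1 + 2/(Real.sqrt (2*Real.pi) * α)) * (2*ε*L)
      = ε*(1+2*L) + 2*((1+2*L) * (ε / Real.sqrt (2*Real.pi) / α)) := by
    field_simp
  rw [hUval]
  linarith

lemma Mhash_lower {ε : ℝ} (hε0 : (0:ℝ) < ε) (hε2 : ε < 1/2) (hL : (28561:ℝ) ≤ Real.log (1/ε)) :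
      1 - 1/(2*Real.sqrt (Real.sqrt (Real.log (1/ε)))) ≤
        Mhash ε / (2 * ε * Real.log (1/ε)) := by
  set L := Real.log (1/ε) with hLdef
  have hL0 : (0:ℝ) < L := by linarith
  have hexpL : Real.exp (-L) = ε := by
    rw [hLdef, one_div, Real.log_inv, neg_neg, Real.exp_log hε0]
  set w := Real.sqrt (Real.sqrt L) with hwdef
  have hsL : (169:ℝ) ≤ Real.sqrt L := by
    rw [show (169:ℝ) = Real.sqrt (169^2) from (Real.sqrt_sq (by norm_num)).symm]
    exact Real.sqrt_le_sqrt (by norm_num; linarith)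
  have hw13 : (13:ℝ) ≤ w := by
    rw [hwdef, show (13:ℝ) = Real.sqrt (13^2) from (Real.sqrt_sq (by norm_num)).symm]
    exact Real.sqrt_le_sqrt (by norm_num; linarith)
  have hw0 : (0:ℝ) < w := by linarith
  set gg := Real.sqrt L * w with hggdef
  have hww : w * w = Real.sqrt L := Real.mul_self_sqrt (Real.sqrt_nonneg L)
  have hss : Real.sqrt L * Real.sqrt L = L := Real.mul_self_sqrt hL0.le
  have hqg : gg * w = L := by
    rw [hggdef, mul_assoc, hww, hss]
  have hgg0 : 0 < gg := by nlinarith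
  have hggL : gg ≤ L := by
    have h1 : w ≤ Real.sqrt L := by nlinarith
    nlinarith [Real.sqrt_nonneg L]
  set t := 2*L - gg with htdef
  have ht0 : (0:ℝ) ≤ t := by linarith
  -- key exponential inequality
  have hs3 : Real.sqrt (2*Real.pi) ≤ 3 := by
    have h9 : Real.sqrt (9:ℝ) = 3 := by
      rw [show (9:ℝ) = 3^2 by norm_num, Real.sqrt_sq (by norm_num)]
    rw [← h9]
    exact Real.sqrt_le_sqrt (by nlinarith [Real.pi_le_four])
  have h2L : Real.sqrt (2*L) ≤ 2 * Real.sqrt L := by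
    have h1 : Real.sqrt (2*L) ≤ Real.sqrt (4*L) := Real.sqrt_le_sqrt (by linarith)
    have h2 : Real.sqrt (4*L) = 2 * Real.sqrt L := by
      rw [show (4:ℝ)*L = 2^2*L by norm_num, Real.sqrt_mul (by positivity) L,
        Real.sqrt_sq (by norm_num)]
    linarith
  have hgg_ge : 13 * Real.sqrt L ≤ gg := by
    rw [hggdef]
    nlinarith [Real.sqrt_nonneg L]
  have hexp_ge : 2*Real.sqrt L ≤ gg/2 - 2*Real.sqrt (2*L) - 2 := by
    nlinarith
  have hexp2 : L^2/16 ≤ Real.exp (2*Real.sqrt L) := by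
    have h1 : Real.exp (2*Real.sqrt L) = (Real.exp (Real.sqrt L / 2))^4 := by
      rw [← Real.exp_nat_mul]
      norm_num
      ring_nf
    have h2 : Real.sqrt L / 2 ≤ Real.exp (Real.sqrt L / 2) := by
      have := Real.add_one_le_exp (Real.sqrt L / 2)
      linarith
    have h3 : (Real.sqrt L / 2)^4 ≤ (Real.exp (Real.sqrt L / 2))^4 :=
      pow_le_pow_left₀ (by positivity) h2 4
    have h4 : (Real.sqrt L / 2)^4 = L^2/16 := by
      rw [div_pow, show (Real.sqrt L)^4 = ((Real.sqrt L)^2)^2 by ring,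
        Real.sq_sqrt hL0.le]
      norm_num
    rw [h1, ← h4]
    exact h3
  have hkey : 2 * Real.sqrt (2*Real.pi) * L ≤ Real.exp (gg/2 - 2*Real.sqrt (2*L) - 2) := by
    have h5 : Real.exp (2*Real.sqrt L) ≤ Real.exp (gg/2 - 2*Real.sqrt (2*L) - 2) :=
      Real.exp_le_exp.2 hexp_ge
    have h6a : 2 * Real.sqrt (2*Real.pi) * L ≤ 6*L := by nlinarith [hs3, hL0, sqrt2pi_pos]
    have h6b : 6*L ≤ L^2/16 := by nlinarith [hL, hL0]
    have h6 : 2 * Real.sqrt (2*Real.pi) * L ≤ L^2/16 := by linarith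
    linarith
  -- lower bound for each a
  have hlow : ∀ y ∈ Mrisk ε '' Set.Ici 0, (1 - 1/(2*w)) * (2*ε*L) ≤ y := by
    rintro y ⟨a, ha, rfl⟩
    have ha' : (0:ℝ) ≤ a := ha
    rw [Mrisk_eq]
    have hra := rIoi_nonneg a
    have heq2 : (1 - 1/(2*w)) * (2*ε*L) = 2*ε*L - ε*gg := by
      field_simp
      nlinarith [hqg]
    by_cases hcase : t ≤ a^2
    · nlinarith
    · push_neg at hcase
      set β := Real.sqrt t with hβdef
      have hβ0 : (0:ℝ) ≤ β := Real.sqrt_nonneg t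
      have haβ : a ≤ β := by
        rw [show a = Real.sqrt (a^2) from (Real.sqrt_sq ha').symm]
        exact Real.sqrt_le_sqrt hcase.le
      have hβ2L : β ≤ Real.sqrt (2*L) := Real.sqrt_le_sqrt (by linarith)
      have hβsq : β^2 = t := Real.sq_sqrt ht0
      have hrlow : stdGaussPDF (β+2) ≤ rIoi a :=
        le_trans (pdf_anti (by linarith) (by linarith)) (rIoi_ge ha')
      have hφβ : 2*ε*L ≤ stdGaussPDF (β+2) := by
        have hexpo : -L + (gg/2 - 2*Real.sqrt (2*L) - 2) ≤ -(β+2)^2/2 := by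
          have hexpand : (β+2)^2 = t + 4*β + 4 := by
            rw [← hβsq]; ring
          rw [hexpand, htdef]
          linarith
        have hh1 : Real.exp (-L) * Real.exp (gg/2 - 2*Real.sqrt (2*L) - 2)
            ≤ Real.exp (-(β+2)^2/2) := by
          rw [← Real.exp_add]
          exact Real.exp_le_exp.2 hexpo
        have hh2 : ε * (2 * Real.sqrt (2*Real.pi) * L)
            ≤ Real.exp (-(β+2)^2/2) := by
          rw [← hexpL]
          calc Real.exp (-L) * (2 * Real.sqrt (2*Real.pi) * L)
              ≤ Real.exp (-L) * Real.exp (gg/2 - 2*Real.sqrt (2*L) - 2) :=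
                mul_le_mul_of_nonneg_left hkey (Real.exp_pos _).le
            _ ≤ _ := hh1
        unfold stdGaussPDF
        have hdiv := div_le_div_of_nonneg_right hh2 sqrt2pi_pos.le
        have heqd : ε * (2 * Real.sqrt (2*Real.pi) * L) / Real.sqrt (2*Real.pi) = 2*ε*L := by
          field_simp
        rw [heqd] at hdiv
        exact hdiv
      nlinarith
  have hne : (Mrisk ε '' Set.Ici 0).Nonempty :=
    ⟨Mrisk ε 0, 0, Set.self_mem_Ici, rfl⟩
  have hinf := le_csInf hne hlow
  have h2εL : (0:ℝ) < 2*ε*L := by positivity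
  rw [le_div_iff₀ h2εL]
  exact hinf

/-- In the very sparse limit, M#(ε) = 2ε log(1/ε)(1 + o(1)) as ε → 0⁺. -/
theorem minimax_risk_sparse_asymptotics :
    Filter.Tendsto (fun ε : ℝ => Mhash ε / (2 * ε * Real.log (1/ε)))
      (nhdsWithin 0 (Set.Ioi 0)) (nhds 1) := by
  have hlo_t : Tendsto (fun ε : ℝ => 1 - 1/(2*Real.sqrt (Real.sqrt (Real.log (1/ε)))))
      (nhdsWithin 0 (Set.Ioi 0)) (nhds 1) := by
    have h1 : Tendsto (fun L : ℝ => 1 - 1/(2*Real.sqrt (Real.sqrt L))) atTop (nhds (1 - 0)) := by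
      refine tendsto_const_nhds.sub (tendsto_const_nhds.div_atTop ?_)
      exact Tendsto.const_mul_atTop two_pos (tendsto_sqrt_atTop'.comp tendsto_sqrt_atTop')
    rw [sub_zero] at h1
    exact h1.comp tendsto_log_inv
  have hhi_t : Tendsto (fun ε : ℝ =>
      (1 + 2*Real.log (1/ε))/(2*Real.log (1/ε))
        * (1 + 2/(Real.sqrt (2*Real.pi) * Real.sqrt (2*Real.log (1/ε)))))
      (nhdsWithin 0 (Set.Ioi 0)) (nhds 1) := by
    have hA : Tendsto (fun L : ℝ => (1 + 2*L)/(2*L)) atTop (nhds 1) := by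
      have h1 : Tendsto (fun L : ℝ => 1/(2*L) + 1) atTop (nhds (0 + 1)) :=
        (tendsto_const_nhds.div_atTop (Tendsto.const_mul_atTop two_pos tendsto_id)).add
          tendsto_const_nhds
      rw [zero_add] at h1
      refine h1.congr' ?_
      filter_upwards [eventually_gt_atTop (0:ℝ)] with L hL
      field_simp
    have hB : Tendsto (fun L : ℝ => 1 + 2/(Real.sqrt (2*Real.pi) * Real.sqrt (2*L)))
        atTop (nhds (1 + 0)) := by
      refine tendsto_const_nhds.add (tendsto_const_nhds.div_atTop ?_)
      exact Tendsto.const_mul_atTop sqrt2pi_pos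
        (tendsto_sqrt_atTop'.comp (Tendsto.const_mul_atTop two_pos tendsto_id))
    rw [add_zero] at hB
    have hAB := hA.mul hB
    rw [mul_one] at hAB
    exact hAB.comp tendsto_log_inv
  have hev2 : ∀ᶠ ε in nhdsWithin (0:ℝ) (Set.Ioi 0), ε < 1/2 :=
    (eventually_lt_nhds (by norm_num : (0:ℝ) < 1/2)).filter_mono nhdsWithin_le_nhds
  have hev3 : ∀ᶠ ε in nhdsWithin (0:ℝ) (Set.Ioi 0), (28561:ℝ) ≤ Real.log (1/ε) :=
    tendsto_log_inv.eventually (eventually_ge_atTop (28561:ℝ))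
  -- upper bound
  have hub : ∀ᶠ ε in nhdsWithin (0:ℝ) (Set.Ioi 0),
      Mhash ε / (2 * ε * Real.log (1/ε)) ≤
      (1 + 2*Real.log (1/ε))/(2*Real.log (1/ε))
        * (1 + 2/(Real.sqrt (2*Real.pi) * Real.sqrt (2*Real.log (1/ε)))) := by
    filter_upwards [eventually_mem_nhdsWithin, hev2, hev3] with ε hε hε2 hL
    exact Mhash_upper hε hε2 hL
  -- lower bound
  have hlb : ∀ᶠ ε in nhdsWithin (0:ℝ) (Set.Ioi 0),
      1 - 1/(2*Real.sqrt (Real.sqrt (Real.log (1/ε)))) ≤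
        Mhash ε / (2 * ε * Real.log (1/ε)) := by
    filter_upwards [eventually_mem_nhdsWithin, hev2, hev3] with ε hε hε2 hL
    exact Mhash_lower hε hε2 hL
  exact tendsto_of_tendsto_of_tendsto_of_le_of_le' hlo_t hhi_t hlb hub
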